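/- Let Q ⊂ ℝ^d be compact. The family C_ℓ of subsets of Q that are a union of at most ℓ closed convex subsets of Q is closed in the hyperspace of nonempty closed subsets of Q equipped with the Hausdorff metric; in particular C_ℓ is compact in the Hausdorff metric. -/

import Mathlib

open TopologicalSpace Metric Set

section Aux

variable {α : Type*} [MetricSpace α]

/-- The union map on tuples of nonempty compacts. -/
noncomputable def unionNC {ι : Type*} [Fintype ι] [Nonempty ι]
    (S : ι → NonemptyCompacts α) : NonemptyCompacts α :=
  ⟨⟨⋃ i, (S i : Set α), isCompact_iUnion fun i => (S i).isCompact⟩,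
    let i := Classical.arbitrary ι
    ((S i).nonempty).mono (subset_iUnion (fun i => ((S i : Set α))) i)⟩

lemma unionNC_coe {ι : Type*} [Fintype ι] [Nonempty ι] (S : ι → NonemptyCompacts α) :
    (unionNC S : Set α) = ⋃ i, (S i : Set α) := rfl

lemma hEdistNeTop (s t : NonemptyCompacts α) :
    EMetric.hausdorffEdist (s : Set α) (t : Set α) ≠ ⊤ :=
  Metric.hausdorffEdist_ne_top_of_nonempty_of_bounded s.nonempty t.nonempty
    s.isCompact.isBounded t.isCompact.isBounded

lemma unionNC_lipschitz {ι : Type*} [Fintype ι] [Nonempty ι] :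
    LipschitzWith 1 (unionNC (ι := ι) (α := α)) := by
  apply LipschitzWith.of_dist_le_mul
  intro S T
  rw [NNReal.coe_one, one_mul, NonemptyCompacts.dist_eq, unionNC_coe, unionNC_coe]
  apply hausdorffDist_le_of_mem_dist dist_nonneg
  · rintro x hx
    obtain ⟨i, hi⟩ := mem_iUnion.1 hx
    obtain ⟨y, hy, hxy⟩ := (T i).isCompact.exists_infDist_eq_dist (T i).nonempty x
    refine ⟨y, mem_iUnion.2 ⟨i, hy⟩, ?_⟩
    rw [← hxy]
    calc infDist x (T i) ≤ hausdorffDist (S i : Set α) (T i) :=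
          infDist_le_hausdorffDist_of_mem hi (hEdistNeTop _ _)
      _ = dist (S i) (T i) := (NonemptyCompacts.dist_eq).symm
      _ ≤ dist S T := dist_le_pi_dist S T i
  · rintro x hx
    obtain ⟨i, hi⟩ := mem_iUnion.1 hx
    obtain ⟨y, hy, hxy⟩ := (S i).isCompact.exists_infDist_eq_dist (S i).nonempty x
    refine ⟨y, mem_iUnion.2 ⟨i, hy⟩, ?_⟩
    rw [← hxy]
    calc infDist x (S i) ≤ hausdorffDist (T i : Set α) (S i) :=
          infDist_le_hausdorffDist_of_mem hi (hEdistNeTop _ _)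
      _ = dist (S i) (T i) := by
          rw [NonemptyCompacts.dist_eq, hausdorffDist_comm]
      _ ≤ dist S T := dist_le_pi_dist S T i

end Aux

section Conv

variable {d : ℕ}

local notation "E" => EuclideanSpace ℝ (Fin d)

lemma isClosed_convexNC : IsClosed {K : NonemptyCompacts E | Convex ℝ (K : Set E)} := by
  apply IsSeqClosed.isClosed
  intro f K hf hK
  intro x hx y hy a b ha hb hab
  have hKclosed : IsClosed (SetLike.coe K) := K.isCompact.isClosed
  rw [← hKclosed.closure_eq]
  rw [Metric.mem_closure_iff]
  intro ε hε
  have hε3 : 0 < ε / 3 := by linarith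
  obtain ⟨N, hN⟩ := (Metric.tendsto_atTop.1 hK) (ε / 3) hε3
  have hdist : hausdorffDist (SetLike.coe (f N)) (SetLike.coe K) < ε / 3 := by
    have := hN N le_rfl
    rwa [NonemptyCompacts.dist_eq] at this
  obtain ⟨x', hx', hxx'⟩ := exists_dist_lt_of_hausdorffDist_lt' hx hdist (hEdistNeTop _ _)
  obtain ⟨y', hy', hyy'⟩ := exists_dist_lt_of_hausdorffDist_lt' hy hdist (hEdistNeTop _ _)
  have hz' : a • x' + b • y' ∈ (SetLike.coe (f N)) := hf N hx' hy' ha hb hab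
  obtain ⟨w, hw, hzw⟩ := exists_dist_lt_of_hausdorffDist_lt hz' hdist (hEdistNeTop _ _)
  refine ⟨w, hw, ?_⟩
  have h1 : dist (a • x + b • y) (a • x' + b • y') ≤ a * dist x x' + b * dist y y' := by
    calc dist (a • x + b • y) (a • x' + b • y')
        ≤ dist (a • x) (a • x') + dist (b • y) (b • y') := dist_add_add_le _ _ _ _
      _ = a * dist x x' + b * dist y y' := by
          rw [dist_smul₀, dist_smul₀, Real.norm_of_nonneg ha, Real.norm_of_nonneg hb]
  have h2 : a * dist x x' + b * dist y y' ≤ ε / 3 := by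
    have hxa : a * dist x x' ≤ a * (ε / 3) :=
      mul_le_mul_of_nonneg_left (by rw [dist_comm]; exact hxx'.le) ha
    have hyb : b * dist y y' ≤ b * (ε / 3) :=
      mul_le_mul_of_nonneg_left (by rw [dist_comm]; exact hyy'.le) hb
    calc a * dist x x' + b * dist y y' ≤ a * (ε / 3) + b * (ε / 3) := add_le_add hxa hyb
      _ = ε / 3 := by rw [← add_mul, hab, one_mul]
  calc dist (a • x + b • y) w ≤ dist (a • x + b • y) (a • x' + b • y')
        + dist (a • x' + b • y') w := dist_triangle _ _ _
    _ < ε / 3 + ε / 3 := by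
        have := lt_of_le_of_lt (le_trans h1 h2) (by linarith : ε / 3 < ε / 3 + 1)
        exact add_lt_add_of_le_of_lt (le_trans h1 h2) hzw
    _ < ε := by linarith

lemma isCompact_subNC {Q : Set E} (hQ : IsCompact Q) :
    IsCompact {K : NonemptyCompacts E | (K : Set E) ⊆ Q} := by
  haveI : CompactSpace Q := isCompact_iff_compactSpace.mp hQ
  set g : NonemptyCompacts Q → NonemptyCompacts E := fun L =>
    ⟨⟨Subtype.val '' (L : Set Q), L.isCompact.image continuous_subtype_val⟩,
      L.nonempty.image _⟩ with hg
  have hiso : Isometry g := by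
    intro L M
    simp only [hg]
    show EMetric.hausdorffEdist _ _ = EMetric.hausdorffEdist _ _
    exact EMetric.hausdorffEdist_image isometry_subtype_coe
  have hrange : {K : NonemptyCompacts E | (K : Set E) ⊆ Q} = Set.range g := by
    ext K
    constructor
    · intro hK
      have hne : (Subtype.val ⁻¹' (K : Set E) : Set Q).Nonempty := by
        obtain ⟨x, hx⟩ := K.nonempty
        exact ⟨⟨x, hK hx⟩, hx⟩
      have hcl : IsClosed (Subtype.val ⁻¹' (K : Set E) : Set Q) :=
        K.isCompact.isClosed.preimage continuous_subtype_val
      refine ⟨⟨⟨Subtype.val ⁻¹' (K : Set E), hcl.isCompact⟩, hne⟩, ?_⟩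
      apply NonemptyCompacts.ext
      simp only [hg]
      show Subtype.val '' (Subtype.val ⁻¹' (K : Set E)) = (K : Set E)
      rw [Subtype.image_preimage_coe]
      exact Set.inter_eq_right.mpr hK
    · rintro ⟨L, rfl⟩
      exact Subtype.coe_image_subset Q (L : Set Q)
  rw [hrange]
  exact isCompact_range hiso.continuous

end Conv

/-- The family `C_ℓ` of subsets of a compact `Q ⊂ ℝ^d` that are a union of at
most `ℓ` nonempty closed convex subsets of `Q` is closed in the hyperspace of
nonempty compact subsets with the Hausdorff metric; in particular it is
compact. -/
theorem stmt_4 (d ℓ : ℕ) (Q : Set (EuclideanSpace ℝ (Fin d))) (hQ : IsCompact Q)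
    (Cℓ : Set (NonemptyCompacts (EuclideanSpace ℝ (Fin d))))
    (hCℓ : Cℓ = {K : NonemptyCompacts (EuclideanSpace ℝ (Fin d)) |
      (K : Set (EuclideanSpace ℝ (Fin d))) ⊆ Q ∧
      ∃ S : Fin ℓ → Set (EuclideanSpace ℝ (Fin d)),
        (∀ i, IsClosed (S i) ∧ Convex ℝ (S i) ∧ (S i).Nonempty ∧ S i ⊆ Q) ∧
        (K : Set (EuclideanSpace ℝ (Fin d))) = ⋃ i, S i}) :
    IsClosed Cℓ ∧ IsCompact Cℓ := by
  rcases Nat.eq_zero_or_pos ℓ with hℓ | hℓ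
  · subst hℓ
    have : Cℓ = ∅ := by
      rw [hCℓ]
      ext K
      simp only [Set.mem_setOf_eq, Set.mem_empty_iff_false, iff_false, not_and]
      rintro - ⟨S, -, hU⟩
      obtain ⟨x, hx⟩ := K.nonempty
      rw [hU] at hx
      exact (Set.mem_iUnion.1 hx).elim (fun i => i.elim0)
    rw [this]
    exact ⟨isClosed_empty, isCompact_empty⟩
  · haveI : Nonempty (Fin ℓ) := ⟨⟨0, hℓ⟩⟩
    have hAcomp : IsCompact ({K : NonemptyCompacts (EuclideanSpace ℝ (Fin d)) |
        (K : Set (EuclideanSpace ℝ (Fin d))) ⊆ Q} ∩ {K | Convex ℝ (K : Set (EuclideanSpace ℝ (Fin d)))}) :=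
      (isCompact_subNC hQ).inter_right isClosed_convexNC
    have hDcomp : IsCompact (Set.univ.pi fun _ : Fin ℓ =>
        ({K : NonemptyCompacts (EuclideanSpace ℝ (Fin d)) |
        (K : Set (EuclideanSpace ℝ (Fin d))) ⊆ Q} ∩ {K | Convex ℝ (K : Set (EuclideanSpace ℝ (Fin d)))})) :=
      isCompact_univ_pi fun _ => hAcomp
    have himg : Cℓ = unionNC '' (Set.univ.pi fun _ : Fin ℓ =>
        ({K : NonemptyCompacts (EuclideanSpace ℝ (Fin d)) |
        (K : Set (EuclideanSpace ℝ (Fin d))) ⊆ Q} ∩ {K | Convex ℝ (K : Set (EuclideanSpace ℝ (Fin d)))})) := by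
      rw [hCℓ]
      ext K
      constructor
      · rintro ⟨hsub, S, hS, hU⟩
        have hScomp : ∀ i, IsCompact (S i) := fun i =>
          hQ.of_isClosed_subset (hS i).1 (hS i).2.2.2
        refine ⟨fun i => ⟨⟨S i, hScomp i⟩, (hS i).2.2.1⟩, ?_, ?_⟩
        · intro i _
          exact ⟨(hS i).2.2.2, (hS i).2.1⟩
        · apply NonemptyCompacts.ext
          rw [unionNC_coe]
          exact hU.symm
      · rintro ⟨S, hS, rfl⟩
        refine ⟨?_, fun i => (S i : Set (EuclideanSpace ℝ (Fin d))), fun i => ?_, unionNC_coe S⟩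
        · rw [unionNC_coe]
          exact Set.iUnion_subset fun i => (hS i (Set.mem_univ i)).1
        · exact ⟨(S i).isCompact.isClosed, (hS i (Set.mem_univ i)).2,
            (S i).nonempty, (hS i (Set.mem_univ i)).1⟩
    have hCcomp : IsCompact Cℓ := by
      rw [himg]
      exact hDcomp.image unionNC_lipschitz.continuous
    exact ⟨hCcomp.isClosed, hCcomp⟩
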